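/- arXiv:1108.1671 — 3 statements merged into one kernel-verified Lean document; each statement's English description precedes it below -/
import Mathlib

section
/- Let k ≥ 2, C ⊆ E_k, α ∈ E_k^{n−2}, ρ ∈ R_k^n, and a ∈ C. Suppose: (i) for every d ∈ C there exists β ∈ E_k^{n−2} with ρ(d d β) = 1; (ii) the sets D_0 = {a} and D_{i+1} = { e ∈ C : ∃ d ∈ D_i, ρ(d e α) = 1 } satisfy that for every m ≥ 1 there exists j ≥ m with D_j ≠ D_{j+1}. Then the set [{ρ, (x∈C)} ∪ SR_k] ∩ R̃_k is infinite. -/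
/-- Tuples over `E_k = Fin k`. -/
abbrev Tuple (k n : ℕ) := Fin n → Fin k

/-- A predicate on `E_k`: an arity together with a set of tuples of that arity. -/
abbrev Pred (k : ℕ) := Σ n : ℕ, Set (Tuple k n)

/-- The binary equality predicate `σ_k^=`. -/
def eqPred (k : ℕ) : Pred k := ⟨2, {t | t 0 = t 1}⟩

/-- The 0-ary predicate `false`. -/
def falsePred (k : ℕ) : Pred k := ⟨0, ∅⟩

/-- `[S]`: primitive positive closure of a set of predicates. -/
def ppClosure (k : ℕ) (S : Set (Pred k)) : Set (Pred k) :=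
  { ρ | ∃ (l s : ℕ) (σ : Fin s → Pred k)
      (z : (i : Fin s) → Fin (σ i).1 → Fin (ρ.1 + l)),
      (∀ i, σ i ∈ S ∪ {eqPred k, falsePred k}) ∧
      ∀ x : Tuple k ρ.1, x ∈ ρ.2 ↔
        ∃ y : Tuple k l, ∀ i, (fun j => Fin.append x y (z i j)) ∈ (σ i).2 }

/-- `AND(S)`: quantifier-free conjunctions of predicates of `S`, with no
repeated variable inside a single conjunct. -/
def andClosure (k : ℕ) (S : Set (Pred k)) : Set (Pred k) :=
  { ρ | ∃ (s : ℕ) (σ : Fin s → Pred k)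
      (z : (i : Fin s) → Fin (σ i).1 → Fin ρ.1),
      (∀ i, σ i ∈ S) ∧ (∀ i, Function.Injective (z i)) ∧
      ∀ x : Tuple k ρ.1, x ∈ ρ.2 ↔ ∀ i, (fun j => x (z i j)) ∈ (σ i).2 }

/-- An essential predicate: not a conjunction of predicates of smaller arity. -/
def Essential (k : ℕ) (ρ : Pred k) : Prop :=
  ρ ∉ andClosure k { σ : Pred k | σ.1 < ρ.1 }

/-- `f` preserves the predicate `ρ`. -/
def Preserves {k m : ℕ} (f : Tuple k m → Fin k) (ρ : Pred k) : Prop :=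
  ∀ α : Fin m → Tuple k ρ.1, (∀ i, α i ∈ ρ.2) →
    (fun j => f fun i => α i j) ∈ ρ.2

/-- `f` is a near-unanimity function. -/
def IsNUF {k n : ℕ} (f : Tuple k n → Fin k) : Prop :=
  ∀ x y : Fin k, ∀ i : Fin n, f (Function.update (fun _ => y) i x) = y

/-- `Pol(G)` contains a near-unanimity function of arity `n`. -/
def HasNUF (k : ℕ) (G : Set (Pred k)) (n : ℕ) : Prop :=
  ∃ f : Tuple k n → Fin k, IsNUF f ∧ ∀ ρ ∈ G, Preserves f ρ

/-- `SR_k`: the unary singleton predicates `ρ_{=,a}`. -/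
def SR (k : ℕ) : Set (Pred k) := { ρ | ∃ a : Fin k, ρ = ⟨1, {t | t 0 = a}⟩ }

/-- The unary predicate `(x ∈ C)`. -/
def memPred (k : ℕ) (C : Set (Fin k)) : Pred k := ⟨1, { t | t 0 ∈ C }⟩

/-- `Strike(ρ)`: predicates obtained from `ρ` by existentially quantifying some
coordinates and injectively renaming the rest. -/
def strike (k : ℕ) (ρ : Pred k) : Set (Pred k) :=
  { ρ' | ∃ (l : ℕ) (z : Fin ρ.1 → Fin (ρ'.1 + l)),
      Function.Injective z ∧
      ∀ x : Tuple k ρ'.1, x ∈ ρ'.2 ↔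
        ∃ y : Tuple k l, (fun j => Fin.append x y (z j)) ∈ ρ.2 }

/-- The tuple `(d, e, α)`. -/
def pre2 {k m : ℕ} (d e : Fin k) (α : Tuple k m) : Tuple k (m + 2) :=
  Fin.cons d (Fin.cons e α)

/-- The `(m+2)`-ary chain predicate
`ρ(x_1,…,x_n) = ∃y_1…y_{n-1}, fst(x_1,y_1) ∧ ⋀ mid_i(y_i,x_{i+1},y_{i+1}) ∧ lst(y_{n-1},x_n)`. -/
def chainPred (k m : ℕ) (fst lst : Set (Tuple k 2))
    (mid : Fin m → Set (Tuple k 3)) : Pred k :=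
  ⟨m + 2, { x | ∃ y : Tuple k (m + 1),
      ![x 0, y 0] ∈ fst ∧
      (∀ i : Fin m, ![y i.castSucc, x i.succ.castSucc, y i.succ] ∈ mid i) ∧
      ![y (Fin.last m), x (Fin.last (m + 1))] ∈ lst }⟩

/-- If a predicate is a conjunction of smaller-arity predicates, then any tuple
all of whose one-coordinate "repairs" are in the predicate is itself in it. -/
lemma mem_of_repairs {k n : ℕ} {T : Set (Tuple k n)}
    (hand : (⟨n, T⟩ : Pred k) ∈ andClosure k {σ : Pred k | σ.1 < n})
    (x : Tuple k n)
    (hrep : ∀ t : Fin n, ∃ x' ∈ T, ∀ j, j ≠ t → x' j = x j) : x ∈ T := by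
  obtain ⟨s, σ, z, hmem, hinj, hiff⟩ := hand
  refine (hiff x).mpr ?_
  intro i
  have hlt : (σ i).1 < n := hmem i
  obtain ⟨t, ht⟩ : ∃ t : Fin n, ∀ j, z i j ≠ t := by
    by_contra h
    push_neg at h
    have hsurj : Function.Surjective (z i) := fun t => h t
    have := Fintype.card_le_of_surjective (z i) hsurj
    simp at this
    omega
  obtain ⟨x', hx'T, hagree⟩ := hrep t
  have hcon := (hiff x').mp hx'T i
  have heq : (fun j => x (z i j)) = fun j => x' (z i j) := by
    funext j
    exact (hagree (z i j) (ht j)).symm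
  rw [heq]
  exact hcon

/-- `ppClosure` is closed under (generalized) projections along any variable map. -/
lemma pp_proj {k : ℕ} {S : Set (Pred k)} {n n' : ℕ} {T : Set (Tuple k n)}
    (w : Fin n' → Fin n) (hpp : (⟨n, T⟩ : Pred k) ∈ ppClosure k S) :
    (⟨n', {u | ∃ x, x ∈ T ∧ u = fun i => x (w i)}⟩ : Pred k) ∈ ppClosure k S := by
  obtain ⟨l, s, σ, z, hmem, hiff⟩ := hpp
  classical
  set A : Fin (s + n') → Σ p : Pred k, Fin p.1 → Fin (n' + (n + l)) :=
    Fin.addCases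
      (fun i => ⟨σ i, fun j => Fin.natAdd n' (z i j)⟩)
      (fun i => ⟨eqPred k,
        ![Fin.castAdd (n + l) i, Fin.natAdd n' (Fin.castAdd l (w i))]⟩) with hA
  have hAl : ∀ i : Fin s, A (Fin.castAdd n' i)
      = ⟨σ i, fun j => Fin.natAdd n' (z i j)⟩ := by
    intro i; simp only [hA]; exact Fin.addCases_left i
  have hAr : ∀ i : Fin n', A (Fin.natAdd s i)
      = ⟨eqPred k, ![Fin.castAdd (n + l) i, Fin.natAdd n' (Fin.castAdd l (w i))]⟩ := by
    intro i; simp only [hA]; exact Fin.addCases_right i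
  have key : ∀ (P : (Σ p : Pred k, Fin p.1 → Fin (n' + (n + l))) → Prop),
      (∀ i : Fin s, P ⟨σ i, fun j => Fin.natAdd n' (z i j)⟩) →
      (∀ i : Fin n', P ⟨eqPred k,
        ![Fin.castAdd (n + l) i, Fin.natAdd n' (Fin.castAdd l (w i))]⟩) →
      ∀ i, P (A i) := by
    intro P hl hr i
    refine Fin.addCases (motive := fun i => P (A i)) ?_ ?_ i
    · intro i; rw [hAl i]; exact hl i
    · intro i; rw [hAr i]; exact hr i
  refine ⟨n + l, s + n', fun i => (A i).1, fun i => (A i).2, ?_, ?_⟩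
  · exact key (fun q => q.1 ∈ S ∪ {eqPred k, falsePred k}) (fun i => hmem i)
      (fun i => by right; left; rfl)
  · intro u
    constructor
    · rintro ⟨x, hx, hu⟩
      obtain ⟨y, hy⟩ := (hiff x).mp hx
      refine ⟨Fin.append x y, ?_⟩
      refine key (fun q => (fun j => Fin.append u (Fin.append x y) (q.2 j)) ∈ q.1.2) ?_ ?_
      · intro i
        have heq : (fun j => Fin.append u (Fin.append x y) (Fin.natAdd n' (z i j)))
            = fun j => Fin.append x y (z i j) := by
          funext j; rw [Fin.append_right]
        show (fun j => Fin.append u (Fin.append x y) (Fin.natAdd n' (z i j))) ∈ (σ i).2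
        rw [heq]
        exact hy i
      · intro i
        show Fin.append u (Fin.append x y) ((![Fin.castAdd (n + l) i,
            Fin.natAdd n' (Fin.castAdd l (w i))] : Fin 2 → _) 0)
          = Fin.append u (Fin.append x y) ((![Fin.castAdd (n + l) i,
            Fin.natAdd n' (Fin.castAdd l (w i))] : Fin 2 → _) 1)
        simp only [Matrix.cons_val_zero, Matrix.cons_val_one, Matrix.head_cons]
        rw [Fin.append_left, Fin.append_right, Fin.append_left, hu]
    · rintro ⟨Y, hY⟩
      have hY' : ∀ i, (fun j => Fin.append u Y ((A i).2 j)) ∈ (A i).1.2 := hY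
      have hxy : ∀ v : Fin (n + l),
          Fin.append (fun c => Y (Fin.castAdd l c)) (fun e => Y (Fin.natAdd n e)) v = Y v := by
        intro v
        refine Fin.addCases (motive := fun v =>
          Fin.append (fun c => Y (Fin.castAdd l c)) (fun e => Y (Fin.natAdd n e)) v = Y v) ?_ ?_ v
        · intro i; rw [Fin.append_left]
        · intro i; rw [Fin.append_right]
      have hxT : (fun c => Y (Fin.castAdd l c)) ∈ T := by
        refine (hiff _).mpr ⟨(fun e => Y (Fin.natAdd n e)), ?_⟩
        intro i
        have h1 := hY' (Fin.castAdd n' i)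
        rw [hAl i] at h1
        have heq : (fun j => Fin.append (fun c => Y (Fin.castAdd l c))
            (fun e => Y (Fin.natAdd n e)) (z i j))
            = fun j => Fin.append u Y (Fin.natAdd n' (z i j)) := by
          funext j; rw [hxy, Fin.append_right]
        rw [heq]
        exact h1
      refine ⟨fun c => Y (Fin.castAdd l c), hxT, ?_⟩
      funext i
      have h2 := hY' (Fin.natAdd s i)
      rw [hAr i] at h2
      have h3 : Fin.append u Y ((![Fin.castAdd (n + l) i,
            Fin.natAdd n' (Fin.castAdd l (w i))] : Fin 2 → _) 0)
          = Fin.append u Y ((![Fin.castAdd (n + l) i,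
            Fin.natAdd n' (Fin.castAdd l (w i))] : Fin 2 → _) 1) := h2
      simp only [Matrix.cons_val_zero, Matrix.cons_val_one, Matrix.head_cons] at h3
      rw [Fin.append_left, Fin.append_right] at h3
      exact h3
/-- If all essential predicates in the closure have arity ≤ N₀, then every predicate
in the closure of arity ≥ N₀ is determined by its N₀-ary projections. -/
lemma claim_decomp {k : ℕ} {S : Set (Pred k)} (N₀ : ℕ)
    (hb : ∀ ρ : Pred k, ρ ∈ ppClosure k S → Essential k ρ → ρ.1 ≤ N₀) :
    ∀ (d n : ℕ), n = N₀ + d → ∀ T : Set (Tuple k n),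
      (⟨n, T⟩ : Pred k) ∈ ppClosure k S →
      ∀ x : Tuple k n,
        (∀ w : Fin N₀ → Fin n, Function.Injective w →
          ∃ x' ∈ T, ∀ i, x' (w i) = x (w i)) →
        x ∈ T := by
  intro d
  induction d with
  | zero =>
    intro n hn T hpp x hx
    subst hn
    obtain ⟨x', hx'T, hag⟩ := hx id (fun _ _ h => h)
    have : x' = x := funext fun i => hag i
    rwa [← this]
  | succ d ih =>
    intro n hn T hpp x hx
    subst hn
    have hnE : ¬ Essential k (⟨N₀ + (d + 1), T⟩ : Pred k) := by
      intro hE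
      have := hb _ hpp hE
      simp at this
    have hand : (⟨N₀ + (d + 1), T⟩ : Pred k)
        ∈ andClosure k {σ : Pred k | σ.1 < N₀ + (d + 1)} := not_not.mp hnE
    refine mem_of_repairs hand x ?_
    intro t
    -- project away coordinate t
    have hppt := pp_proj (w := (t : Fin (N₀ + d + 1)).succAbove) hpp
    have hmem := ih (N₀ + d) rfl _ hppt (fun i => x (t.succAbove i)) ?_
    · obtain ⟨x', hx'T, heq⟩ := hmem
      refine ⟨x', hx'T, ?_⟩
      intro j hj
      obtain ⟨i, hi⟩ := Fin.exists_succAbove_eq hj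
      rw [← hi]
      exact (congrFun heq i).symm
    · intro v hv
      obtain ⟨x', hx'T, hag⟩ := hx (fun i => t.succAbove (v i))
        (Fin.succAbove_right_injective.comp hv)
      refine ⟨fun i => x' (t.succAbove i), ⟨x', hx'T, rfl⟩, ?_⟩
      intro i
      exact hag i
/-- A function preserves `R` and `C` (a polymorphism of the structure). -/
def PolyPres {k m : ℕ} (R : Set (Tuple k (m + 2))) (C : Set (Fin k)) (nn : ℕ)
    (f : Tuple k nn → Fin k) : Prop :=
  (∀ θ : Fin nn → Tuple k (m + 2), (∀ t, θ t ∈ R) →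
      (fun c => f (fun t => θ t c)) ∈ R) ∧
  (∀ γ : Tuple k nn, (∀ t, γ t ∈ C) → f γ ∈ C)

/-- The canonical "polymorphism image" predicate is primitive positive definable. -/
lemma canonical_mem_pp {k m : ℕ} (hk : 0 < k) (R : Set (Tuple k (m + 2)))
    (C : Set (Fin k)) (nn M : ℕ) (col : Fin M → Tuple k nn) :
    (⟨M, {x | ∃ f : Tuple k nn → Fin k, PolyPres R C nn f ∧
        x = fun j => f (col j)}⟩ : Pred k)
      ∈ ppClosure k ({⟨m + 2, R⟩, memPred k C} ∪ SR k) := by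
  classical
  set ll : ℕ := k ^ nn with hll
  set e : Tuple k nn ≃ Fin (k ^ nn) := finFunctionFinEquiv with he
  set E1 : Tuple k (m + 2) ≃ Fin (k ^ (m + 2)) := finFunctionFinEquiv with hE1
  set rr : ℕ := (k ^ (m + 2)) ^ nn with hrr
  set E2 : (Fin nn → Fin (k ^ (m + 2))) ≃ Fin rr := finFunctionFinEquiv with hE2
  set Θ : Fin rr → Fin nn → Tuple k (m + 2) :=
    fun i t => E1.symm (E2.symm i t) with hΘ
  set trivAtom : Σ p : Pred k, Fin p.1 → Fin (M + ll) :=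
    ⟨eqPred k, fun _ => Fin.natAdd M (e (fun _ => ⟨0, hk⟩))⟩ with htriv
  set FR : Fin rr → Σ p : Pred k, Fin p.1 → Fin (M + ll) :=
    fun i => if h : ∀ t, Θ i t ∈ R then
      ⟨⟨m + 2, R⟩, fun c => Fin.natAdd M (e (fun t => Θ i t c))⟩
    else trivAtom with hFR
  set FC : Fin ll → Σ p : Pred k, Fin p.1 → Fin (M + ll) :=
    fun i => if h : ∀ t, e.symm i t ∈ C then
      ⟨memPred k C, fun _ => Fin.natAdd M i⟩
    else trivAtom with hFC
  set FE : Fin M → Σ p : Pred k, Fin p.1 → Fin (M + ll) :=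
    fun j => ⟨eqPred k, ![Fin.castAdd ll j, Fin.natAdd M (e (col j))]⟩ with hFE
  have hFRpos : ∀ i (h : ∀ t, Θ i t ∈ R),
      FR i = ⟨⟨m + 2, R⟩, fun c => Fin.natAdd M (e (fun t => Θ i t c))⟩ := by
    intro i h; simp only [hFR]; exact dif_pos h
  have hFRneg : ∀ i, ¬ (∀ t, Θ i t ∈ R) → FR i = trivAtom := by
    intro i h; simp only [hFR]; exact dif_neg h
  have hFCpos : ∀ i (h : ∀ t, e.symm i t ∈ C),
      FC i = ⟨memPred k C, fun _ => Fin.natAdd M i⟩ := by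
    intro i h; simp only [hFC]; exact dif_pos h
  have hFCneg : ∀ i, ¬ (∀ t, e.symm i t ∈ C) → FC i = trivAtom := by
    intro i h; simp only [hFC]; exact dif_neg h
  set A : Fin (rr + (ll + M)) → Σ p : Pred k, Fin p.1 → Fin (M + ll) :=
    Fin.addCases FR (Fin.addCases FC FE) with hA
  have hA1 : ∀ i, A (Fin.castAdd (ll + M) i) = FR i := by
    intro i; simp only [hA]; exact Fin.addCases_left i
  have hA2 : ∀ i, A (Fin.natAdd rr (Fin.castAdd M i)) = FC i := by
    intro i; simp only [hA]
    rw [Fin.addCases_right]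
    exact Fin.addCases_left i
  have hA3 : ∀ i, A (Fin.natAdd rr (Fin.natAdd ll i)) = FE i := by
    intro i; simp only [hA]
    rw [Fin.addCases_right]
    exact Fin.addCases_right i
  have key : ∀ (P : (Σ p : Pred k, Fin p.1 → Fin (M + ll)) → Prop),
      (∀ i, P (FR i)) → (∀ i, P (FC i)) → (∀ i, P (FE i)) → ∀ i, P (A i) := by
    intro P h1 h2 h3 i
    refine Fin.addCases (motive := fun i => P (A i)) ?_ ?_ i
    · intro i; rw [hA1 i]; exact h1 i
    · intro i
      refine Fin.addCases (motive := fun i => P (A (Fin.natAdd rr i))) ?_ ?_ i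
      · intro i; rw [hA2 i]; exact h2 i
      · intro i; rw [hA3 i]; exact h3 i
  have htrivmem : ∀ (x : Tuple k M) (Y : Tuple k ll),
      (fun j => Fin.append x Y (trivAtom.2 j)) ∈ trivAtom.1.2 := by
    intro x Y
    show Fin.append x Y (Fin.natAdd M (e (fun _ => ⟨0, hk⟩)))
        = Fin.append x Y (Fin.natAdd M (e (fun _ => ⟨0, hk⟩)))
    rfl
  have hSR : ({⟨m + 2, R⟩, memPred k C} ∪ SR k : Set (Pred k)) ∪ {eqPred k, falsePred k}
      = ({⟨m + 2, R⟩, memPred k C} ∪ SR k) ∪ {eqPred k, falsePred k} := rfl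
  have htrivS : trivAtom.1 ∈ ({⟨m + 2, R⟩, memPred k C} ∪ SR k : Set (Pred k))
      ∪ {eqPred k, falsePred k} := Or.inr (Set.mem_insert _ _)
  refine ⟨ll, rr + (ll + M), fun i => (A i).1, fun i => (A i).2, ?_, ?_⟩
  · refine key (fun q => q.1 ∈ _ ∪ {eqPred k, falsePred k}) ?_ ?_ ?_
    · intro i
      by_cases h : ∀ t, Θ i t ∈ R
      · rw [hFRpos i h]
        exact Or.inl (Or.inl (Set.mem_insert _ _))
      · rw [hFRneg i h]
        exact htrivS
    · intro i
      by_cases h : ∀ t, e.symm i t ∈ C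
      · rw [hFCpos i h]
        exact Or.inl (Or.inl (Set.mem_insert_of_mem _ rfl))
      · rw [hFCneg i h]
        exact htrivS
    · intro i
      exact Or.inr (Set.mem_insert _ _)
  · intro x
    constructor
    · rintro ⟨f, hf, hx⟩
      refine ⟨fun ι => f (e.symm ι), ?_⟩
      refine key (fun q => (fun j => Fin.append x (fun ι => f (e.symm ι)) (q.2 j)) ∈ q.1.2)
        ?_ ?_ ?_
      · intro i
        by_cases h : ∀ t, Θ i t ∈ R
        · rw [hFRpos i h]
          have heq : (fun c => Fin.append x (fun ι => f (e.symm ι))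
              (Fin.natAdd M (e (fun t => Θ i t c))))
              = fun c => f (fun t => Θ i t c) := by
            funext c
            rw [Fin.append_right]
            simp
          show (fun c => Fin.append x (fun ι => f (e.symm ι))
              (Fin.natAdd M (e (fun t => Θ i t c)))) ∈ R
          rw [heq]
          exact hf.1 _ h
        · rw [hFRneg i h]
          exact htrivmem _ _
      · intro i
        by_cases h : ∀ t, e.symm i t ∈ C
        · rw [hFCpos i h]
          show Fin.append x (fun ι => f (e.symm ι)) (Fin.natAdd M i) ∈ C
          rw [Fin.append_right]
          exact hf.2 _ h
        · rw [hFCneg i h]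
          exact htrivmem _ _
      · intro j
        show Fin.append x (fun ι => f (e.symm ι))
            ((![Fin.castAdd ll j, Fin.natAdd M (e (col j))] : Fin 2 → _) 0)
          = Fin.append x (fun ι => f (e.symm ι))
            ((![Fin.castAdd ll j, Fin.natAdd M (e (col j))] : Fin 2 → _) 1)
        simp only [Matrix.cons_val_zero, Matrix.cons_val_one, Matrix.head_cons]
        rw [Fin.append_left, Fin.append_right]
        simp only [Equiv.symm_apply_apply]
        rw [hx]
    · rintro ⟨Y, hY⟩
      have hY' : ∀ i, (fun j => Fin.append x Y ((A i).2 j)) ∈ (A i).1.2 := hY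
      refine ⟨fun g => Y (e g), ⟨?_, ?_⟩, ?_⟩
      · intro θ hθ
        set ι := E2 (fun t => E1 (θ t)) with hι
        have hdec : Θ ι = θ := by
          funext t
          simp only [hΘ, hι, Equiv.symm_apply_apply]
        have hcond : ∀ t, Θ ι t ∈ R := by rw [hdec]; exact hθ
        have h1 := hY' (Fin.castAdd (ll + M) ι)
        rw [hA1, hFRpos ι hcond] at h1
        have h1' : (fun c => Fin.append x Y (Fin.natAdd M (e (fun t => Θ ι t c)))) ∈ R := h1
        rw [hdec] at h1'
        have heq : (fun c => Fin.append x Y (Fin.natAdd M (e (fun t => θ t c))))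
            = fun c => Y (e (fun t => θ t c)) := by
          funext c; rw [Fin.append_right]
        rw [heq] at h1'
        exact h1'
      · intro γ hγ
        have hcond : ∀ t, e.symm (e γ) t ∈ C := by
          rw [Equiv.symm_apply_apply]; exact hγ
        have h2 := hY' (Fin.natAdd rr (Fin.castAdd M (e γ)))
        rw [hA2, hFCpos (e γ) hcond] at h2
        have h3 : Fin.append x Y (Fin.natAdd M (e γ)) ∈ C := h2
        rwa [Fin.append_right] at h3
      · funext j
        have h3 := hY' (Fin.natAdd rr (Fin.natAdd ll j))
        rw [hA3, hFE] at h3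
        have h4 : Fin.append x Y
            ((![Fin.castAdd ll j, Fin.natAdd M (e (col j))] : Fin 2 → _) 0)
          = Fin.append x Y
            ((![Fin.castAdd ll j, Fin.natAdd M (e (col j))] : Fin 2 → _) 1) := h3
        simp only [Matrix.cons_val_zero, Matrix.cons_val_one, Matrix.head_cons] at h4
        rw [Fin.append_left, Fin.append_right] at h4
        exact h4
/-- From membership in `D j` extract an `α`-path from `a`. -/
lemma exists_path {k m : ℕ} {R : Set (Tuple k (m + 2))} {C : Set (Fin k)}
    {α : Tuple k m} {a : Fin k} (ha : a ∈ C)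
    {D : ℕ → Set (Fin k)} (hD0 : D 0 = {a})
    (hDs : ∀ i, D (i + 1) = { e | e ∈ C ∧ ∃ d ∈ D i, pre2 d e α ∈ R }) :
    ∀ j (v : Fin k), v ∈ D j → ∃ p : ℕ → Fin k,
      p 0 = a ∧ p j = v ∧ (∀ i, i < j → pre2 (p i) (p (i + 1)) α ∈ R) ∧
      (∀ i, i ≤ j → p i ∈ C) := by
  intro j
  induction j with
  | zero =>
    intro v hv
    rw [hD0] at hv
    refine ⟨fun _ => a, rfl, ?_, ?_, ?_⟩
    · simpa using hv.symm
    · intro i hi; omega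
    · intro i _; exact ha
  | succ j ih =>
    intro v hv
    rw [hDs j] at hv
    obtain ⟨hvC, d, hd, hR⟩ := hv
    obtain ⟨p', h0, hj, hstep, hC⟩ := ih d hd
    refine ⟨fun i => if i ≤ j then p' i else v, ?_, ?_, ?_, ?_⟩
    · simp [h0]
    · simp
    · intro i hi
      by_cases hij : i + 1 ≤ j
      · simp only [if_pos (by omega : i ≤ j), if_pos hij]
        exact hstep i (by omega)
      · have hieq : i = j := by omega
        subst hieq
        simp only [if_pos (le_refl i), if_neg hij, hj]
        exact hR
    · intro i hi
      by_cases hij : i ≤ j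
      · simp only [if_pos hij]; exact hC i hij
      · simp only [if_neg hij]; exact hvC

/-- A near-unanimity polymorphism forces the chain `D` to be increasing. -/
lemma D_mono_of_NUF {k m : ℕ} (hk : 0 < k) {R : Set (Tuple k (m + 2))}
    {C : Set (Fin k)} {α : Tuple k m} {a : Fin k} (ha : a ∈ C)
    (hdiag : ∀ d ∈ C, ∃ β : Tuple k m, pre2 d d β ∈ R)
    {D : ℕ → Set (Fin k)} (hD0 : D 0 = {a})
    (hDs : ∀ i, D (i + 1) = { e | e ∈ C ∧ ∃ d ∈ D i, pre2 d e α ∈ R })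
    {nn : ℕ} (hnn : 0 < nn) (f : Tuple k nn → Fin k)
    (hf : PolyPres R C nn f) (hNUF : IsNUF f) :
    ∀ j, nn ≤ j → D j ⊆ D (j + 1) := by
  classical
  have fconst : ∀ c : Fin k, f (fun _ => c) = c := by
    intro c
    have h := hNUF c c ⟨0, hnn⟩
    rwa [Function.update_eq_self] at h
  intro j hj v hv
  obtain ⟨p, hp0, hpj, hstep, hpC⟩ := exists_path ha hD0 hDs j v hv
  set βf : Fin k → Tuple k m :=
    fun d => if hd : d ∈ C then (hdiag d hd).choose else fun _ => ⟨0, hk⟩ with hβf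
  have hβspec : ∀ d, d ∈ C → pre2 d d (βf d) ∈ R := by
    intro d hd
    simp only [hβf, dif_pos hd]
    exact (hdiag d hd).choose_spec
  set W : Fin nn → ℕ → Fin k :=
    fun t i => if i ≤ (t : ℕ) then p i else p (i - 1) with hW
  set Q : ℕ → Fin k := fun i => f (fun t => W t i) with hQdef
  -- the combined step
  have hkey : ∀ s, s < j + 1 → pre2 (Q s) (Q (s + 1)) α ∈ R := by
    intro s hs
    set θ : Fin nn → Tuple k (m + 2) :=
      fun t => pre2 (W t s) (W t (s + 1))
        (if (t : ℕ) = s then βf (p s) else α) with hθ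
    have hrow : ∀ t, θ t ∈ R := by
      intro t
      simp only [hθ, hW]
      rcases lt_trichotomy (t : ℕ) s with hts | hts | hts
      · -- t < s : already paused, shifted step
        rw [if_neg (by omega), if_neg (by omega), if_neg (by omega)]
        obtain ⟨q, rfl⟩ : ∃ q, s = q + 1 := ⟨s - 1, by omega⟩
        have : q + 1 - 1 = q := by omega
        rw [this]
        have : q + 1 + 1 - 1 = q + 1 := by omega
        rw [this]
        exact hstep q (by omega)
      · -- t = s : pause
        rw [if_pos (by omega), if_neg (by omega), if_pos hts]
        have : s + 1 - 1 = s := by omega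
        rw [this]
        exact hβspec (p s) (hpC s (by omega))
      · -- s < t : ordinary step
        rw [if_pos (by omega), if_pos (by omega), if_neg (by omega)]
        exact hstep s (by omega)
    have hcomb := hf.1 θ hrow
    have hrew : (fun c => f (fun t => θ t c)) = pre2 (Q s) (Q (s + 1)) α := by
      funext c
      refine Fin.cases ?_ ?_ c
      · -- head 1
        have : (fun t => θ t 0) = fun t => W t s := by
          funext t; simp [hθ, pre2]
        rw [this]
        rfl
      · intro c1
        refine Fin.cases ?_ ?_ c1
        · -- head 2
          have : (fun t => θ t (Fin.succ 0)) = fun t => W t (s + 1) := by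
            funext t; simp [hθ, pre2]
          rw [this]
          rfl
        · -- tail coordinates
          intro c2
          have hval : (fun t => θ t (Fin.succ (Fin.succ c2)))
              = fun t : Fin nn => (if (t : ℕ) = s then βf (p s) else α) c2 := by
            funext t; simp [hθ, pre2]
          rw [hval]
          have hrhs : pre2 (Q s) (Q (s + 1)) α (Fin.succ (Fin.succ c2)) = α c2 := by
            simp [pre2]
          rw [hrhs]
          by_cases hsn : s < nn
          · set t₀ : Fin nn := ⟨s, hsn⟩ with ht₀
            have hupd : (fun t : Fin nn => (if (t : ℕ) = s then βf (p s) else α) c2)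
                = Function.update (fun _ => α c2) t₀ (βf (p s) c2) := by
              funext t
              rw [Function.update_apply]
              by_cases ht : t = t₀
              · rw [if_pos ht, if_pos (by rw [ht])]
              · rw [if_neg ht, if_neg (by
                  intro hc
                  exact ht (Fin.ext hc))]
            rw [hupd]
            exact hNUF _ _ _
          · have hconst : (fun t : Fin nn => (if (t : ℕ) = s then βf (p s) else α) c2)
                = fun _ => α c2 := by
              funext t
              rw [if_neg (by omega)]
            rw [hconst]
            exact fconst _
    rw [hrew] at hcomb
    exact hcomb
  -- Q stays in the chain
  have hQD : ∀ s, s ≤ j + 1 → Q s ∈ D s := by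
    intro s
    induction s with
    | zero =>
      intro _
      have : Q 0 = a := by
        have hw : (fun t : Fin nn => W t 0) = fun _ => a := by
          funext t
          simp only [hW]
          rw [if_pos (by omega)]
          exact hp0
        simp only [hQdef]
        rw [hw]
        exact fconst a
      rw [this, hD0]
      exact Set.mem_singleton _
    | succ s ih =>
      intro hs
      rw [hDs s]
      refine ⟨?_, Q s, ih (by omega), hkey s (by omega)⟩
      · show Q (s + 1) ∈ C
        simp only [hQdef]
        refine hf.2 _ ?_
        intro t
        simp only [hW]
        by_cases hts : s + 1 ≤ (t : ℕ)
        · rw [if_pos hts]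
          exact hpC (s + 1) (by have := t.2; omega)
        · rw [if_neg hts]
          have : s + 1 - 1 = s := by omega
          rw [this]
          exact hpC s (by omega)
  -- conclude
  have hfin : Q (j + 1) = v := by
    have hw : (fun t : Fin nn => W t (j + 1)) = fun _ => p j := by
      funext t
      simp only [hW]
      rw [if_neg (by have := t.2; omega)]
      rfl
    simp only [hQdef]
    rw [hw]
    rw [fconst]
    exact hpj
  have := hQD (j + 1) (le_refl _)
  rwa [hfin] at this
theorem infinite_essential_of_unstable_sets (k m : ℕ) (hk : 2 ≤ k)
    (C : Set (Fin k)) (α : Tuple k m) (R : Set (Tuple k (m + 2)))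
    (a : Fin k) (ha : a ∈ C)
    (hdiag : ∀ d ∈ C, ∃ β : Tuple k m, pre2 d d β ∈ R)
    (D : ℕ → Set (Fin k)) (hD0 : D 0 = {a})
    (hDs : ∀ i, D (i + 1) = { e | e ∈ C ∧ ∃ d ∈ D i, pre2 d e α ∈ R })
    (hne : ∀ m' : ℕ, 1 ≤ m' → ∃ j, m' ≤ j ∧ D j ≠ D (j + 1)) :
    { σ ∈ ppClosure k ({⟨m + 2, R⟩, memPred k C} ∪ SR k) |
      Essential k σ }.Infinite := by
  classical
  have hk0 : 0 < k := by omega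
  by_contra hinf
  have hfin : { σ ∈ ppClosure k ({⟨m + 2, R⟩, memPred k C} ∪ SR k) |
      Essential k σ }.Finite := Set.not_infinite.mp hinf
  -- bound on arities of essential predicates
  obtain ⟨N₀, hN₀⟩ := (hfin.image Sigma.fst).bddAbove
  have hb : ∀ ρ : Pred k, ρ ∈ ppClosure k ({⟨m + 2, R⟩, memPred k C} ∪ SR k) →
      Essential k ρ → ρ.1 ≤ N₀ := by
    intro ρ h1 h2
    exact hN₀ ⟨ρ, ⟨h1, h2⟩, rfl⟩
  set nn : ℕ := N₀ + 1 with hnn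
  set M : ℕ := k * (k * nn) with hM
  set EP : (Fin k × Fin k × Fin nn) ≃ Fin M :=
    (Equiv.prodCongr (Equiv.refl (Fin k)) finProdFinEquiv).trans finProdFinEquiv with hEP
  set col : Fin M → Tuple k nn :=
    fun j => Function.update (fun _ => (EP.symm j).2.1) (EP.symm j).2.2 (EP.symm j).1
    with hcol
  set xstar : Tuple k M := fun j => (EP.symm j).2.1 with hxstar
  set Tset : Set (Tuple k M) :=
    {x | ∃ f : Tuple k nn → Fin k, PolyPres R C nn f ∧ x = fun j => f (col j)} with hTset
  have hpp : (⟨M, Tset⟩ : Pred k)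
      ∈ ppClosure k ({⟨m + 2, R⟩, memPred k C} ∪ SR k) :=
    canonical_mem_pp hk0 R C nn M col
  have hMge : N₀ ≤ M := by
    have h1 : nn ≤ k * nn := Nat.le_mul_of_pos_left nn (by omega)
    have h2 : k * nn ≤ k * (k * nn) := Nat.le_mul_of_pos_left _ (by omega)
    omega
  have hyp : ∀ w : Fin N₀ → Fin M, Function.Injective w →
      ∃ x' ∈ Tset, ∀ i, x' (w i) = xstar (w i) := by
    intro w hw
    obtain ⟨t, ht⟩ : ∃ t : Fin nn, ∀ i, (EP.symm (w i)).2.2 ≠ t := by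
      by_contra h
      push_neg at h
      have hsurj : Function.Surjective (fun i => (EP.symm (w i)).2.2) := fun t => h t
      have := Fintype.card_le_of_surjective _ hsurj
      simp at this
      omega
    refine ⟨fun j => col j t, ⟨fun g => g t, ⟨?_, ?_⟩, rfl⟩, ?_⟩
    · intro θ hθ
      exact hθ t
    · intro γ hγ
      exact hγ t
    · intro i
      show col (w i) t = xstar (w i)
      simp only [hcol, hxstar]
      rw [Function.update_apply, if_neg (Ne.symm (ht i))]
  have hxmem : xstar ∈ Tset := by
    refine claim_decomp N₀ hb (M - N₀) M (by omega) Tset hpp xstar hyp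
  obtain ⟨f, hfP, hfx⟩ := hxmem
  have hNUF : IsNUF f := by
    intro x y i
    have h1 : xstar (EP (x, y, i)) = y := by
      simp only [hxstar, Equiv.symm_apply_apply]
    have h2 : col (EP (x, y, i)) = Function.update (fun _ => y) i x := by
      simp only [hcol, Equiv.symm_apply_apply]
    have h3 := congrFun hfx (EP (x, y, i))
    rw [h1, h2] at h3
    exact h3.symm
  have hmono : ∀ j, nn ≤ j → D j ⊆ D (j + 1) :=
    D_mono_of_NUF hk0 ha hdiag hD0 hDs (by omega) f hfP hNUF
  have hchain : ∀ (i j1 : ℕ), nn ≤ j1 → D j1 ⊆ D (j1 + i) := by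
    intro i
    induction i with
    | zero => intro j1 _; exact subset_rfl
    | succ i ih =>
      intro j1 hj1
      exact subset_trans (ih j1 hj1) (hmono (j1 + i) (by omega))
  have hgrow : ∀ r : ℕ, ∃ j, nn ≤ j ∧ r ≤ (D j).ncard := by
    intro r
    induction r with
    | zero => exact ⟨nn, le_refl _, Nat.zero_le _⟩
    | succ r ih =>
      obtain ⟨j, hj1, hj2⟩ := ih
      obtain ⟨j', hj', hnej'⟩ := hne (j + 1) (by omega)
      have hsub : D j ⊆ D j' := by
        have heq : j + (j' - j) = j' := by omega
        have := hchain (j' - j) j hj1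
        rwa [heq] at this
      have hss : D j' ⊂ D (j' + 1) :=
        ssubset_of_subset_of_ne (hmono j' (by omega)) hnej'
      have hc1 : (D j).ncard ≤ (D j').ncard :=
        Set.ncard_le_ncard hsub (Set.toFinite _)
      have hc2 : (D j').ncard < (D (j' + 1)).ncard :=
        Set.ncard_lt_ncard hss (Set.toFinite _)
      exact ⟨j' + 1, by omega, by omega⟩
  obtain ⟨j, _, hcard⟩ := hgrow (k + 1)
  have hle : (D j).ncard ≤ k := by
    have h1 : (D j).ncard ≤ (Set.univ : Set (Fin k)).ncard :=
      Set.ncard_le_ncard (Set.subset_univ _) (Set.toFinite _)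
    have h2 : (Set.univ : Set (Fin k)).ncard = k := by
      rw [Set.ncard_univ]
      simp
    omega
  omega
end

section
/- Let k ≥ 2 and ρ ∈ R_k. Then [{ρ}] ∩ R̃_k is finite if and only if [{ρ} ∪ SR_k] ∩ R̃_k is finite. -/
namespace SRAux

lemma appendVal {k n l : ℕ} (u : Fin n → Fin k) (v : Fin l → Fin k) (q : Fin (n+l)) :
    Fin.append u v q = if h : (q:ℕ) < n then u ⟨q, h⟩ else v ⟨(q:ℕ) - n, by omega⟩ := by
  rcases Nat.lt_or_ge (q:ℕ) n with h | h
  · rw [dif_pos h]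
    have hq : q = Fin.castAdd l ⟨q, h⟩ := by ext; simp
    conv_lhs => rw [hq]
    exact Fin.append_left u v _
  · rw [dif_neg (by omega)]
    have hq : q = Fin.natAdd n ⟨(q:ℕ) - n, by omega⟩ := by ext; simp; omega
    conv_lhs => rw [hq]
    exact Fin.append_right u v _

lemma succAboveVal {n : ℕ} (i : Fin (n+1)) (j : Fin n) :
    ((i.succAbove j : Fin (n+1)) : ℕ) = if (j:ℕ) < (i:ℕ) then (j:ℕ) else (j:ℕ)+1 := by
  rw [Fin.succAbove]
  split_ifs with h1 h2 h2
  · rfl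
  · exact absurd (by simpa [Fin.lt_def] using h1) h2
  · exact absurd (by simpa [Fin.lt_def] using h2) h1
  · rfl

/-- L1: essentiality criterion. -/
lemma mem_of_not_essential {k n : ℕ} {G : Set (Tuple k n)}
    (hne : ¬ Essential k ⟨n, G⟩) (x : Tuple k n)
    (H : ∀ i : Fin n, ∃ b ∈ G, ∀ j, j ≠ i → b j = x j) : x ∈ G := by
  have hmem := not_not.mp hne
  obtain ⟨s, σc, z, hlt, hinj, hiff⟩ := hmem
  refine (hiff x).mpr ?_
  intro i'
  have harlt : (σc i').1 < n := hlt i'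
  have hnsurj : ¬ Function.Surjective (z i') := by
    intro hs
    have := Fintype.card_le_of_surjective (z i') hs
    simp at this; omega
  rw [Function.Surjective] at hnsurj
  push_neg at hnsurj
  obtain ⟨c, hc⟩ := hnsurj
  obtain ⟨b, hbG, hb2⟩ := H c
  have hxz : (fun j => x (z i' j)) = (fun j => b (z i' j)) :=
    funext fun j => (hb2 _ (hc j)).symm
  rw [hxz]
  exact (hiff b).mp hbG i'

/-- monotonicity of ppClosure. -/
lemma ppClosure_mono {k : ℕ} {S T : Set (Pred k)} (hST : S ⊆ T) :
    ppClosure k S ⊆ ppClosure k T := by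
  rintro ρ' ⟨l, s, σ, z, hmem, hiff⟩
  refine ⟨l, s, σ, z, fun i => ?_, hiff⟩
  rcases hmem i with h | h
  · exact Or.inl (hST h)
  · exact Or.inr h

/-- predicates of bounded arity form a finite set. -/
lemma finite_arity_le (k m : ℕ) : {p : Pred k | p.1 ≤ m}.Finite := by
  have hsub : {p : Pred k | p.1 ≤ m} ⊆
      Set.range (fun q : Σ i : Fin (m+1), Set (Tuple k (i:ℕ)) =>
        (⟨(q.1:ℕ), q.2⟩ : Pred k)) := by
    rintro ⟨n, A⟩ hn
    exact ⟨⟨⟨n, by simpa using Nat.lt_succ_of_le hn⟩, A⟩, rfl⟩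
  exact (Set.finite_range _).subset hsub

end SRAux

namespace SRAux

def remapV (iv n' p : ℕ) : ℕ :=
  if p < iv then p else if p = iv then n' else if p < n'+1 then p-1 else p

lemma remapV_lt {iv n' l p : ℕ} (hiv : iv ≤ n') (hp : p < (n'+1)+l) :
    remapV iv n' p < n' + (l+1) := by
  unfold remapV; split_ifs <;> omega

/-- L2: striking one coordinate stays in the closure. -/
lemma proj_mem_ppClosure {k : ℕ} {S : Set (Pred k)} {n' : ℕ} {G : Set (Tuple k (n'+1))}
    (hG : (⟨n'+1, G⟩ : Pred k) ∈ ppClosure k S) (i : Fin (n'+1)) :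
    (⟨n', {t : Tuple k n' | ∃ b ∈ G, ∀ j : Fin n', b (i.succAbove j) = t j}⟩ : Pred k)
      ∈ ppClosure k S := by
  obtain ⟨l, s, σ, z, hmem, hiff⟩ := hG
  have hile : (i:ℕ) ≤ n' := by have := i.isLt; omega
  have hlt : ∀ p : Fin ((n'+1)+l), remapV (i:ℕ) n' p < n' + (l+1) :=
    fun p => remapV_lt hile p.isLt
  have key : ∀ (b : Tuple k (n'+1)) (y : Tuple k l) (p : Fin ((n'+1)+l)),
      Fin.append (fun j => b (i.succAbove j)) (Fin.cons (b i) y) ⟨remapV (i:ℕ) n' p, hlt p⟩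
        = Fin.append b y p := by
    intro b y p
    have hpl := p.isLt
    rw [appendVal, appendVal]
    rcases Nat.lt_or_ge (p:ℕ) (i:ℕ) with h1 | h1
    · have hr : remapV (i:ℕ) n' (p:ℕ) = (p:ℕ) := if_pos h1
      rw [dif_pos (show ((⟨remapV (i:ℕ) n' p, hlt p⟩ : Fin (n'+(l+1))):ℕ) < n' by
            dsimp only; omega),
        dif_pos (by omega)]
      show b (i.succAbove ⟨remapV (i:ℕ) n' (p:ℕ), _⟩) = b ⟨(p:ℕ), _⟩
      congr 1
      ext
      rw [succAboveVal]
      dsimp only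
      split_ifs <;> omega
    · rcases Nat.eq_or_lt_of_le h1 with h2 | h2
      · have hr : remapV (i:ℕ) n' (p:ℕ) = n' := by
          unfold remapV; rw [if_neg (by omega), if_pos h2.symm]
        rw [dif_neg (show ¬ ((⟨remapV (i:ℕ) n' p, hlt p⟩ : Fin (n'+(l+1))):ℕ) < n' by
            dsimp only; omega),
          dif_pos (by omega)]
        have h0 : (⟨((⟨remapV (i:ℕ) n' p, hlt p⟩ : Fin (n'+(l+1))):ℕ) - n', by
            dsimp only; omega⟩ : Fin (l+1)) = 0 := by
          ext
          simp only [Fin.val_zero]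
          omega
        rw [h0, Fin.cons_zero]
        congr 1
        ext
        dsimp only
        omega
      · rcases Nat.lt_or_ge (p:ℕ) (n'+1) with h3 | h3
        · have hr : remapV (i:ℕ) n' (p:ℕ) = (p:ℕ) - 1 := by
            unfold remapV; rw [if_neg (by omega), if_neg (by omega), if_pos h3]
          rw [dif_pos (show ((⟨remapV (i:ℕ) n' p, hlt p⟩ : Fin (n'+(l+1))):ℕ) < n' by
              dsimp only; omega),
            dif_pos (by omega)]
          show b (i.succAbove ⟨remapV (i:ℕ) n' (p:ℕ), _⟩) = b ⟨(p:ℕ), _⟩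
          congr 1
          ext
          rw [succAboveVal]
          dsimp only
          split_ifs <;> omega
        · have hr : remapV (i:ℕ) n' (p:ℕ) = (p:ℕ) := by
            unfold remapV; rw [if_neg (by omega), if_neg (by omega), if_neg (by omega)]
          rw [dif_neg (show ¬ ((⟨remapV (i:ℕ) n' p, hlt p⟩ : Fin (n'+(l+1))):ℕ) < n' by
              dsimp only; omega),
            dif_neg (by omega)]
          have h0 : (⟨((⟨remapV (i:ℕ) n' p, hlt p⟩ : Fin (n'+(l+1))):ℕ) - n', by
              dsimp only; omega⟩ : Fin (l+1))
              = Fin.succ ⟨(p:ℕ) - (n'+1), by omega⟩ := by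
            ext
            simp only [Fin.val_succ]
            omega
          rw [h0, Fin.cons_succ]
  refine ⟨l+1, s, σ, fun i' j => ⟨remapV (i:ℕ) n' (z i' j), hlt _⟩, hmem, ?_⟩
  intro t
  constructor
  · rintro ⟨b, hbG, hbt⟩
    obtain ⟨y, hy⟩ := (hiff b).mp hbG
    refine ⟨Fin.cons (b i) y, ?_⟩
    intro i''
    have ht : t = fun j => b (i.succAbove j) := funext fun j => (hbt j).symm
    have hfun : (fun j => Fin.append t (Fin.cons (b i) y) ⟨remapV (i:ℕ) n' (z i'' j), hlt _⟩)
        = (fun j => Fin.append b y (z i'' j)) := by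
      funext j
      rw [ht]
      exact key b y (z i'' j)
    rw [hfun]
    exact hy i''
  · rintro ⟨y', hy'⟩
    set b : Tuple k (n'+1) := fun q =>
      if h : (q:ℕ) < (i:ℕ) then t ⟨q, Nat.lt_of_lt_of_le h hile⟩
      else if (q:ℕ) = (i:ℕ) then y' 0
      else if h2 : (q:ℕ) - 1 < n' then t ⟨(q:ℕ)-1, h2⟩ else y' 0 with hbdef
    have hbt : ∀ j : Fin n', b (i.succAbove j) = t j := by
      intro j
      have hsv := succAboveVal i j
      have hjl := j.isLt
      simp only [hbdef]
      rcases Nat.lt_or_ge (j:ℕ) (i:ℕ) with h | h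
      · rw [if_pos h] at hsv
        rw [dif_pos (show ((i.succAbove j : Fin (n'+1)):ℕ) < (i:ℕ) by omega)]
        congr 1
        ext
        dsimp only
        omega
      · rw [if_neg (by omega)] at hsv
        rw [dif_neg (by omega), if_neg (by omega), dif_pos (show ((i.succAbove j : Fin (n'+1)):ℕ) - 1 < n' by omega)]
        congr 1
        ext
        dsimp only
        omega
    have hbi : b i = y' 0 := by
      simp only [hbdef]
      rw [dif_neg (by omega)]
      simp
    have hcons : Fin.cons (b i) (fun q => y' q.succ) = y' := by
      funext q
      refine Fin.cases ?_ ?_ q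
      · rw [Fin.cons_zero, hbi]
      · intro q'
        rw [Fin.cons_succ]
    have hbG : b ∈ G := by
      refine (hiff b).mpr ⟨fun q => y' q.succ, ?_⟩
      intro i''
      have hfun : (fun j => Fin.append b (fun q => y' q.succ) (z i'' j))
          = (fun j => Fin.append t y' ⟨remapV (i:ℕ) n' (z i'' j), hlt _⟩) := by
        funext j
        have ht2 : (fun j : Fin n' => b (i.succAbove j)) = t := funext hbt
        rw [← key b (fun q => y' q.succ) (z i'' j), ht2, hcons]
      rw [hfun]
      exact hy' i''
    exact ⟨b, hbG, hbt⟩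

end SRAux

namespace SRAux

/-- B: if all essential predicates in the closure have arity ≤ m, every member of the
closure is determined by its m-coordinate patterns. -/
lemma decompose {k m : ℕ} {S : Set (Pred k)} (hm1 : 1 ≤ m)
    (Hm : ∀ τ ∈ ppClosure k S, Essential k τ → τ.1 ≤ m) :
    ∀ n (G : Set (Tuple k n)), (⟨n, G⟩ : Pred k) ∈ ppClosure k S → 1 ≤ n →
      ∀ x : Tuple k n,
        (∀ u : Fin m → Fin n, ∃ b ∈ G, ∀ j, b (u j) = x (u j)) → x ∈ G := by
  intro n
  induction n using Nat.strong_induction_on with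
  | _ n IH =>
    intro G hG hn x hx
    rcases Nat.lt_or_ge m n with hmn | hmn
    · have hne : ¬ Essential k (⟨n, G⟩ : Pred k) := by
        intro he
        have h : n ≤ m := Hm _ hG he
        omega
      obtain ⟨n', rfl⟩ : ∃ n', n = n'+1 := ⟨n-1, by omega⟩
      refine mem_of_not_essential hne x ?_
      intro i
      have hGicl := proj_mem_ppClosure hG i
      have hxi : (fun j => x (i.succAbove j)) ∈
          {t : Tuple k n' | ∃ b ∈ G, ∀ j : Fin n', b (i.succAbove j) = t j} := by
        refine IH n' (by omega) _ hGicl (by omega) _ ?_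
        intro u
        obtain ⟨b, hbG, hbu⟩ := hx (fun j => i.succAbove (u j))
        exact ⟨fun j => b (i.succAbove j), ⟨b, hbG, fun j => rfl⟩, fun j => hbu j⟩
      obtain ⟨b, hbG, hbt⟩ := hxi
      refine ⟨b, hbG, ?_⟩
      intro j hj
      obtain ⟨j', rfl⟩ := Fin.exists_succAbove_eq hj
      exact hbt j'
    · have hn0 : 0 < n := hn
      obtain ⟨b, hbG, hbu⟩ := hx (fun j =>
        if h : (j:ℕ) < n then (⟨(j:ℕ), h⟩ : Fin n) else ⟨0, hn0⟩)
      have hbx : b = x := by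
        funext q
        have hq := q.isLt
        have hqm : (q:ℕ) < m := by omega
        have h1 := hbu ⟨(q:ℕ), hqm⟩
        simp only [Fin.val_mk] at h1
        rw [dif_pos hq] at h1
        exact h1
      exact hbx ▸ hbG

end SRAux

namespace SRAux

lemma sr_spec {k : ℕ} {p : Pred k} (hp : p ∈ SR k) :
    ∃ (a : Fin k) (h1 : 0 < p.1), ∀ (N : ℕ) (w : Fin p.1 → Fin N) (e : Tuple k N),
      ((fun j => e (w j)) ∈ p.2 ↔ e (w ⟨0, h1⟩) = a) := by
  obtain ⟨a, rfl⟩ := hp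
  exact ⟨a, Nat.one_pos, fun N w e => Iff.rfl⟩

def remap2 (n kk l : ℕ) (p : Fin (n+l)) : Fin ((n+kk)+l) :=
  ⟨if (p:ℕ) < n then (p:ℕ) else (p:ℕ)+kk, by have := p.isLt; split_ifs <;> omega⟩

lemma append_remap2 {k n l : ℕ} (x : Tuple k n) (c : Tuple k k) (y : Tuple k l)
    (p : Fin (n+l)) :
    Fin.append (Fin.append x c) y (remap2 n k l p) = Fin.append x y p := by
  have hpl := p.isLt
  rw [appendVal, appendVal]
  rcases Nat.lt_or_ge (p:ℕ) n with h | h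
  · have hr : ((remap2 n k l p : Fin ((n+k)+l)) : ℕ) = (p:ℕ) := by
      unfold remap2; simp only [Fin.val_mk]; rw [if_pos h]
    rw [dif_pos (show ((remap2 n k l p : Fin ((n+k)+l)) : ℕ) < n + k by omega), dif_pos h,
      appendVal]
    simp only [Fin.val_mk]
    rw [dif_pos (show ((remap2 n k l p : Fin ((n+k)+l)) : ℕ) < n by omega)]
    congr 1
    ext
    simp only [Fin.val_mk]
    omega
  · have hr : ((remap2 n k l p : Fin ((n+k)+l)) : ℕ) = (p:ℕ) + k := by
      unfold remap2; simp only [Fin.val_mk]; rw [if_neg (by omega)]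
    rw [dif_neg (show ¬ ((remap2 n k l p : Fin ((n+k)+l)) : ℕ) < n + k by omega),
      dif_neg (by omega)]
    congr 1
    ext
    simp only [Fin.val_mk]
    omega

lemma append_const {k n l : ℕ} (x : Tuple k n) (c : Tuple k k) (y : Tuple k l) (a : Fin k)
    (h : n + (a:ℕ) < (n+k)+l) :
    Fin.append (Fin.append x c) y ⟨n + (a:ℕ), h⟩ = c a := by
  have hak := a.isLt
  rw [appendVal, dif_pos (by simp only [Fin.val_mk]; omega), appendVal,
    dif_neg (by simp only [Fin.val_mk]; omega)]
  congr 1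
  ext
  simp only [Fin.val_mk]
  omega

/-- C1: constant elimination. -/
lemma sr_elim {k : ℕ} {ρ : Pred k} {n : ℕ} {A : Set (Tuple k n)}
    (hA : (⟨n, A⟩ : Pred k) ∈ ppClosure k ({ρ} ∪ SR k)) :
    ∃ B : Set (Tuple k (n+k)),
      (⟨n+k, B⟩ : Pred k) ∈ ppClosure k {ρ} ∧
      ∀ x : Tuple k n, (x ∈ A ↔ Fin.append x (fun a => a) ∈ B) := by
  obtain ⟨l, s, σ, z, hmem, hiff⟩ := hA
  have hconj : ∀ i : Fin s, ∃ (τ : Pred k) (w : Fin τ.1 → Fin ((n+k)+l)),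
      τ ∈ ({ρ} : Set (Pred k)) ∪ {eqPred k, falsePred k} ∧
      ∀ (x : Tuple k n) (y : Tuple k l),
        ((fun j => Fin.append x y (z i j)) ∈ (σ i).2 ↔
         (fun j => Fin.append (Fin.append x (fun a => a)) y (w j)) ∈ τ.2) := by
    intro i
    by_cases hsr : σ i ∈ SR k
    · obtain ⟨a, h1, hspec⟩ := sr_spec hsr
      have hak := a.isLt
      refine ⟨eqPred k,
        ![remap2 n k l (z i ⟨0, h1⟩), ⟨n + (a:ℕ), by omega⟩], Or.inr (Or.inl rfl), ?_⟩
      intro x y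
      rw [hspec _ (z i) (Fin.append x y)]
      show _ ↔ (fun j => Fin.append (Fin.append x (fun a => a)) y
          ((![remap2 n k l (z i ⟨0, h1⟩), ⟨n + (a:ℕ), by omega⟩] : Fin 2 → _) j)) ∈
          {t : Tuple k 2 | t 0 = t 1}
      simp only [Set.mem_setOf_eq, Matrix.cons_val_zero, Matrix.cons_val_one, Matrix.head_cons]
      rw [append_remap2, append_const]
    · have hτ : σ i ∈ ({ρ} : Set (Pred k)) ∪ {eqPred k, falsePred k} := by
        rcases hmem i with h | h
        · rcases h with h | h
          · exact Or.inl h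
          · exact absurd h hsr
        · exact Or.inr h
      refine ⟨σ i, fun j => remap2 n k l (z i j), hτ, ?_⟩
      intro x y
      have hfun : (fun j => Fin.append x y (z i j))
          = (fun j => Fin.append (Fin.append x (fun a => a)) y (remap2 n k l (z i j))) :=
        funext fun j => (append_remap2 x _ y (z i j)).symm
      rw [hfun]
  choose τ w hτ hw using hconj
  refine ⟨{ t : Tuple k (n+k) | ∃ y : Tuple k l,
      ∀ i, (fun j => Fin.append t y (w i j)) ∈ (τ i).2 },
    ⟨l, s, τ, w, hτ, fun t => Iff.rfl⟩, ?_⟩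
  intro x
  rw [hiff x]
  constructor
  · rintro ⟨y, hy⟩
    exact ⟨y, fun i => (hw i x y).mp (hy i)⟩
  · rintro ⟨y, hy⟩
    exact ⟨y, fun i => (hw i x y).mpr (hy i)⟩

end SRAux

open SRAux in
theorem essential_finite_iff_with_SR (k : ℕ) (hk : 2 ≤ k) (ρ : Pred k) :
    { σ ∈ ppClosure k {ρ} | Essential k σ }.Finite ↔
      { σ ∈ ppClosure k ({ρ} ∪ SR k) | Essential k σ }.Finite := by
  classical
  constructor
  · intro h
    -- extract an arity bound for essential members of [{ρ}]
    have himg : (Sigma.fst '' {σ ∈ ppClosure k {ρ} | Essential k σ}).Finite := h.image _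
    obtain ⟨m₀, hm₀⟩ := himg.bddAbove
    set m := max m₀ 1 with hmdef
    have hm1 : 1 ≤ m := le_max_right _ _
    have Hm : ∀ τ ∈ ppClosure k {ρ}, Essential k τ → τ.1 ≤ m := by
      intro τ h1 h2
      exact le_trans (hm₀ ⟨τ, ⟨h1, h2⟩, rfl⟩) (le_max_left _ _)
    refine (finite_arity_le k m).subset ?_
    rintro ⟨n, A⟩ ⟨hcl, hess⟩
    show n ≤ m
    by_contra hgt
    push_neg at hgt
    apply hess
    obtain ⟨B, hBcl, hcorr⟩ := sr_elim hcl
    set V := {v : Fin m → Fin n // Function.Injective v} with hV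
    let e := (Fintype.equivFin V).symm
    refine ⟨Fintype.card V,
      fun i => ⟨m, {t : Tuple k m | ∃ b ∈ A, ∀ j, b ((e i).1 j) = t j}⟩,
      fun i => (e i).1, fun i => hgt, fun i => (e i).2, ?_⟩
    intro x
    constructor
    · intro hx i
      exact ⟨x, hx, fun j => rfl⟩
    · intro hx
      refine (hcorr x).mpr ?_
      refine decompose hm1 Hm (n+k) B hBcl (by omega) _ ?_
      intro u
      set J : Finset (Fin n) := Finset.univ.image (fun j : Fin m =>
        if h : ((u j):ℕ) < n then (⟨(u j), h⟩ : Fin n) else ⟨0, by omega⟩) with hJ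
      have hJcard : J.card ≤ m := le_trans Finset.card_image_le (by simp)
      obtain ⟨K, hJK, hKcard⟩ :=
        Finset.exists_superset_card_eq hJcard (by simpa using hgt.le)
      set v0 : Fin m → Fin n := fun j => (K.orderIsoOfFin hKcard j : Fin n) with hv0
      have hv0inj : Function.Injective v0 :=
        Subtype.val_injective.comp (K.orderIsoOfFin hKcard).injective
      have hrange : ∀ q : Fin n, q ∈ K → ∃ j, v0 j = q := by
        intro q hq
        exact ⟨(K.orderIsoOfFin hKcard).symm ⟨q, hq⟩, by
          simp only [hv0, OrderIso.apply_symm_apply]⟩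
      have hi := hx (e.symm ⟨v0, hv0inj⟩)
      have he : e (e.symm ⟨v0, hv0inj⟩) = ⟨v0, hv0inj⟩ := Equiv.apply_symm_apply _ _
      simp only [he] at hi
      obtain ⟨b, hbA, hbv⟩ := hi
      refine ⟨Fin.append b (fun a => a), (hcorr b).mp hbA, ?_⟩
      intro j
      rw [appendVal, appendVal]
      by_cases hun : ((u j):ℕ) < n
      · rw [dif_pos hun, dif_pos hun]
        have hmemJ : (⟨(u j), hun⟩ : Fin n) ∈ J := by
          rw [hJ]
          exact Finset.mem_image.mpr ⟨j, Finset.mem_univ _, by rw [dif_pos hun]⟩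
        obtain ⟨j', hj'⟩ := hrange _ (hJK hmemJ)
        rw [← hj']
        exact hbv j'
      · rw [dif_neg hun, dif_neg hun]
  · intro h
    refine h.subset ?_
    rintro σ ⟨hcl, hess⟩
    exact ⟨ppClosure_mono (fun p hp => Or.inl hp) hcl, hess⟩
end

section
/- Let k ≥ 2, let G ⊆ R_k, and let n ∈ ℕ. Then ar([G] ∩ R̃_k) ≤ n if and only if ar([G ∪ SR_k] ∩ R̃_k) ≤ n; moreover, [G] ∩ R̃_k is finite if and only if [G ∪ SR_k] ∩ R̃_k is finite. -/
lemma fin_append_zero {k m : ℕ} (x : Tuple k m) (a : Tuple k 0) : Fin.append x a = x := by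
  have : a = Fin.elim0 := funext fun i => i.elim0
  subst this
  rw [Fin.append_elim0]
  rfl

lemma essential_iff (k r : ℕ) (T : Set (Tuple k (r+1))) :
    Essential k ⟨r+1, T⟩ ↔
      ∃ x, x ∉ T ∧ ∀ i : Fin (r+1), ∃ x' ∈ T, ∀ j, j ≠ i → x' j = x j := by
  constructor
  · intro hess
    by_contra hno
    push_neg at hno
    -- hno : ∀ x, x ∉ T → ∃ i, ∀ x' ∈ T, ∃ j ≠ i, x' j ≠ x j   (roughly)
    apply hess
    refine ⟨r+1, fun i => ⟨r, {t : Tuple k r | ∃ x' ∈ T, ∀ q : Fin r, x' (i.succAbove q) = t q}⟩,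
      fun i => i.succAbove, fun i => Nat.lt_succ_self r,
      fun i => Fin.succAbove_right_injective, ?_⟩
    intro x
    constructor
    · intro hx i
      exact ⟨x, hx, fun q => rfl⟩
    · intro hcond
      by_contra hxT
      obtain ⟨i, hi⟩ := hno x hxT
      obtain ⟨x', hx'T, hx'⟩ := hcond i
      obtain ⟨j, hji, hjx⟩ := hi x' hx'T
      obtain ⟨q, hq⟩ := Fin.exists_succAbove_eq hji
      exact hjx (hq ▸ hx' q)
  · rintro ⟨x, hxT, hP⟩ ⟨s, σ, z, hlt, hinj, hiff⟩
    apply hxT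
    rw [hiff]
    intro t
    have hne : ∃ i, i ∉ Set.range (z t) := by
      by_contra hall
      push_neg at hall
      have hsurj : Function.Surjective (z t) := fun i => hall i
      have := Fintype.card_le_of_surjective (z t) hsurj
      simp at this
      have h2 := hlt t
      simp only [Set.mem_setOf_eq] at h2
      omega
    obtain ⟨i, hi⟩ := hne
    obtain ⟨x', hx'T, hx'⟩ := hP i
    have := (hiff x').mp hx'T t
    have heq : (fun j => x' (z t j)) = (fun j => x (z t j)) := by
      funext j
      exact hx' (z t j) (fun h => hi ⟨j, h⟩)
    rwa [heq] at this

lemma ppClosure_mono (k : ℕ) {G G' : Set (Pred k)} (h : G ⊆ G') :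
    ppClosure k G ⊆ ppClosure k G' := by
  rintro ρ ⟨l, s, σ, z, hmem, hiff⟩
  exact ⟨l, s, σ, z, fun i => Set.union_subset_union_left _ h (hmem i), hiff⟩

lemma fin_append_split {k l1 l2 : ℕ} (y' : Tuple k (l1 + l2)) :
    Fin.append (fun q => y' (Fin.castAdd l2 q)) (fun q => y' (Fin.natAdd l1 q)) = y' := by
  funext w
  induction w using Fin.addCases with
  | left t => rw [Fin.append_left]
  | right q => rw [Fin.append_right]


def ppRemapAux {N M l' l2 : ℕ} (e : Fin N → Fin (M + l')) : Fin (N + l2) → Fin (M + (l' + l2)) :=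
  Fin.addCases
    (fun t : Fin N => Fin.addCases (fun i0 : Fin M => Fin.castAdd (l' + l2) i0)
      (fun q : Fin l' => Fin.natAdd M (Fin.castAdd l2 q)) (e t))
    (fun q2 : Fin l2 => Fin.natAdd M (Fin.natAdd l' q2))

lemma ppRemapAux_key {k N M l' l2 : ℕ} (e : Fin N → Fin (M + l')) (v : Tuple k M)
    (y : Tuple k l') (y2 : Tuple k l2) (w : Fin (N + l2)) :
    Fin.append v (Fin.append y y2) (ppRemapAux e w)
      = Fin.append (fun t => Fin.append v y (e t)) y2 w := by
  unfold ppRemapAux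
  induction w using Fin.addCases with
  | left t =>
    rw [Fin.addCases_left, Fin.append_left]
    induction e t using Fin.addCases with
    | left i0 => rw [Fin.addCases_left, Fin.append_left, Fin.append_left]
    | right q => rw [Fin.addCases_right, Fin.append_right, Fin.append_right, Fin.append_left]
  | right q2 =>
    rw [Fin.addCases_right, Fin.append_right, Fin.append_right, Fin.append_right]

lemma ppClosure_remap (k : ℕ) (G : Set (Pred k)) {N M l' : ℕ} (S : Set (Tuple k N))
    (hS : (⟨N, S⟩ : Pred k) ∈ ppClosure k G) (e : Fin N → Fin (M + l')) :
    (⟨M, {v : Tuple k M | ∃ y : Tuple k l', (fun t => Fin.append v y (e t)) ∈ S}⟩ : Pred k)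
      ∈ ppClosure k G := by
  obtain ⟨l2, s, σ, z, hmem, hiff⟩ := hS
  refine ⟨l' + l2, s, σ, fun i j => ppRemapAux e (z i j), hmem, ?_⟩
  intro v
  simp only [Set.mem_setOf_eq]
  constructor
  · rintro ⟨y, hy⟩
    rw [hiff] at hy
    obtain ⟨y2, hy2⟩ := hy
    refine ⟨Fin.append y y2, fun i => ?_⟩
    have key : (fun j => Fin.append v (Fin.append y y2) (ppRemapAux e (z i j)))
        = (fun j => Fin.append (fun t => Fin.append v y (e t)) y2 (z i j)) := by
      funext j; exact ppRemapAux_key e v y y2 (z i j)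
    rw [key]
    exact hy2 i
  · rintro ⟨y', hy'⟩
    refine ⟨fun q => y' (Fin.castAdd l2 q), ?_⟩
    rw [hiff]
    refine ⟨fun q => y' (Fin.natAdd l' q), fun i => ?_⟩
    have key : (fun j => Fin.append (fun t => Fin.append v (fun q => y' (Fin.castAdd l2 q)) (e t))
          (fun q => y' (Fin.natAdd l' q)) (z i j))
        = (fun j => Fin.append v y' (ppRemapAux e (z i j))) := by
      funext j
      rw [← fin_append_split y', ppRemapAux_key]
      rw [fin_append_split y']
    rw [key]
    exact hy' i

open Classical in
lemma mem_singleton_pred {k : ℕ} {a0 : Fin k} {τ : Pred k}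
    (hτ : τ = ⟨1, {t : Tuple k 1 | t 0 = a0}⟩) (g : Tuple k τ.1) :
    g ∈ τ.2 ↔ g (Fin.cast (congrArg Sigma.fst hτ).symm 0) = a0 := by
  subst hτ
  simp

/-- The embedding of old variable positions into new ones. -/
def ceEmb (m s l : ℕ) : Fin (m + l) → Fin ((m + s) + l) :=
  Fin.addCases (fun i : Fin m => Fin.castAdd l (Fin.castAdd s i))
    (fun q : Fin l => Fin.natAdd (m + s) q)

lemma ceEmb_key {k m s l : ℕ} (x : Tuple k m) (a : Tuple k s) (y : Tuple k l)
    (v : Fin (m + l)) :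
    Fin.append (Fin.append x a) y (ceEmb m s l v) = Fin.append x y v := by
  unfold ceEmb
  induction v using Fin.addCases with
  | left i => rw [Fin.addCases_left, Fin.append_left, Fin.append_left, Fin.append_left]
  | right q => rw [Fin.addCases_right, Fin.append_right, Fin.append_right]

open Classical in
lemma constant_elim (k : ℕ) (hk : 2 ≤ k) (G : Set (Pred k)) (ρ' : Pred k)
    (h : ρ' ∈ ppClosure k (G ∪ SR k)) :
    ∃ (p : ℕ) (a : Tuple k p) (S : Set (Tuple k (ρ'.1 + p))),
      (⟨ρ'.1 + p, S⟩ : Pred k) ∈ ppClosure k G ∧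
      ∀ x : Tuple k ρ'.1, x ∈ ρ'.2 ↔ Fin.append x a ∈ S := by
  obtain ⟨m, T⟩ := ρ'
  obtain ⟨l, s, σ, z, hmem, hiff⟩ := h
  let F : (i : Fin s) → Σ τ : Pred k, (Fin τ.1 → Fin ((m + s) + l)) := fun i =>
    if hsr : σ i ∈ SR k then
      ⟨eqPred k, ![ceEmb m s l (z i (Fin.cast (congrArg Sigma.fst hsr.choose_spec).symm 0)),
        Fin.castAdd l (Fin.natAdd m i)]⟩
    else ⟨σ i, fun jj => ceEmb m s l (z i jj)⟩
  let a : Tuple k s := fun i => if hsr : σ i ∈ SR k then hsr.choose else ⟨0, by omega⟩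
  refine ⟨s, a, {xw : Tuple k (m + s) | ∃ y : Tuple k l,
    ∀ i, (fun jj => Fin.append xw y ((F i).2 jj)) ∈ ((F i).1).2}, ?_, ?_⟩
  · refine ⟨l, s, fun i => (F i).1, fun i => (F i).2, fun i => ?_, fun xw => Iff.rfl⟩
    show (F i).1 ∈ G ∪ {eqPred k, falsePred k}
    by_cases hsr : σ i ∈ SR k
    · have : (F i).1 = eqPred k := by simp only [F, dif_pos hsr]
      rw [this]
      exact Or.inr (Or.inl rfl)
    · have : (F i).1 = σ i := by simp only [F, dif_neg hsr]
      rw [this]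
      rcases hmem i with (hG | hSRmem) | heqf
      · exact Or.inl hG
      · exact absurd hSRmem hsr
      · exact Or.inr heqf
  · intro x
    rw [hiff]
    simp only [Set.mem_setOf_eq]
    constructor
    · rintro ⟨y, hy⟩
      refine ⟨y, fun i => ?_⟩
      by_cases hsr : σ i ∈ SR k
      · have hF : F i = ⟨eqPred k, ![ceEmb m s l (z i (Fin.cast (congrArg Sigma.fst hsr.choose_spec).symm 0)),
          Fin.castAdd l (Fin.natAdd m i)]⟩ := dif_pos hsr
        rw [hF]
        have hold := (mem_singleton_pred hsr.choose_spec _).mp (hy i)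
        show Fin.append (Fin.append x a) y
            (ceEmb m s l (z i (Fin.cast (congrArg Sigma.fst hsr.choose_spec).symm 0)))
          = Fin.append (Fin.append x a) y (Fin.castAdd l (Fin.natAdd m i))
        rw [ceEmb_key, Fin.append_left, Fin.append_right, hold]
        simp only [a, dif_pos hsr]
      · have hF : F i = ⟨σ i, fun jj => ceEmb m s l (z i jj)⟩ := dif_neg hsr
        rw [hF]
        have heq : (fun jj => Fin.append (Fin.append x a) y (ceEmb m s l (z i jj)))
            = fun jj => Fin.append x y (z i jj) := by
          funext jj; exact ceEmb_key x a y (z i jj)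
        show (fun jj => Fin.append (Fin.append x a) y (ceEmb m s l (z i jj))) ∈ (σ i).2
        rw [heq]
        exact hy i
    · rintro ⟨y, hy⟩
      refine ⟨y, fun i => ?_⟩
      by_cases hsr : σ i ∈ SR k
      · have hF : F i = ⟨eqPred k, ![ceEmb m s l (z i (Fin.cast (congrArg Sigma.fst hsr.choose_spec).symm 0)),
          Fin.castAdd l (Fin.natAdd m i)]⟩ := dif_pos hsr
        have hnew := hy i
        rw [hF] at hnew
        rw [mem_singleton_pred hsr.choose_spec]
        have hnew2 : Fin.append (Fin.append x a) y
            (ceEmb m s l (z i (Fin.cast (congrArg Sigma.fst hsr.choose_spec).symm 0)))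
            = Fin.append (Fin.append x a) y (Fin.castAdd l (Fin.natAdd m i)) := hnew
        rw [ceEmb_key, Fin.append_left, Fin.append_right] at hnew2
        rw [hnew2]
        simp only [a, dif_pos hsr]
      · have hF : F i = ⟨σ i, fun jj => ceEmb m s l (z i jj)⟩ := dif_neg hsr
        have hnew := hy i
        rw [hF] at hnew
        have heq : (fun jj => Fin.append (Fin.append x a) y (ceEmb m s l (z i jj)))
            = fun jj => Fin.append x y (z i jj) := by
          funext jj; exact ceEmb_key x a y (z i jj)
        have hnew2 : (fun jj => Fin.append (Fin.append x a) y (ceEmb m s l (z i jj))) ∈ (σ i).2 := hnew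
        rwa [heq] at hnew2

/-- Deleting the coordinate `natAdd (r+1) j`: it is sent to the (quantified) last slot. -/
def delCoord (r p : ℕ) (j : Fin (p+1)) : Fin ((r+1) + (p+1)) → Fin (((r+1)+p) + 1) :=
  Fin.addCases (fun i : Fin (r+1) => Fin.castAdd 1 (Fin.castAdd p i))
    (fun j' : Fin (p+1) =>
      if h : j' = j then Fin.natAdd ((r+1)+p) 0
      else Fin.castAdd 1 (Fin.natAdd (r+1)
        (⟨if j'.1 < j.1 then j'.1 else j'.1 - 1, by
          have hne : j'.1 ≠ j.1 := fun hh => h (Fin.ext hh)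
          have h1 := j'.isLt
          have h2 := j.isLt
          split <;> omega⟩ : Fin p)))

/-- Deleting the `j`-th constant. -/
def delConst {k : ℕ} (p : ℕ) (j : Fin (p+1)) (a : Tuple k (p+1)) : Tuple k p :=
  fun q => a ⟨if q.1 < j.1 then q.1 else q.1 + 1, by have := q.isLt; have := j.isLt; split <;> omega⟩

lemma delConst_spec {k p : ℕ} (j j' : Fin (p+1)) (h : j' ≠ j) (a : Tuple k (p+1)) (q : Fin p)
    (hq : q.1 = if j'.1 < j.1 then j'.1 else j'.1 - 1) : delConst p j a q = a j' := by
  have hne : j'.1 ≠ j.1 := fun hh => h (Fin.ext hh)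
  unfold delConst
  congr 1
  apply Fin.ext
  show (if q.1 < j.1 then q.1 else q.1 + 1) = j'.1
  split_ifs at hq ⊢ <;> omega

lemma delCoord_key {k r p : ℕ} (j : Fin (p+1)) (a : Tuple k (p+1)) (x : Tuple k (r+1))
    (b : Tuple k 1) (t : Fin ((r+1)+(p+1))) :
    Fin.append (Fin.append x (delConst p j a)) b (delCoord r p j t)
      = if t = Fin.natAdd (r+1) j then b 0 else Fin.append x a t := by
  induction t using Fin.addCases with
  | left i0 =>
    rw [if_neg (by
      have := i0.isLt
      simp only [Fin.ext_iff, Fin.coe_castAdd, Fin.coe_natAdd]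
      omega)]
    unfold delCoord
    rw [Fin.addCases_left, Fin.append_left, Fin.append_left, Fin.append_left]
  | right j' =>
    unfold delCoord
    rw [Fin.addCases_right]
    by_cases h : j' = j
    · subst h
      rw [dif_pos rfl, if_pos rfl, Fin.append_right]
    · have hne : j'.1 ≠ j.1 := fun hh => h (Fin.ext hh)
      have hcond : (Fin.natAdd (r+1) j' : Fin ((r+1)+(p+1))) ≠ Fin.natAdd (r+1) j := by
        simp only [ne_eq, Fin.ext_iff, Fin.coe_natAdd]
        omega
      rw [dif_neg h, if_neg hcond]
      rw [Fin.append_left, Fin.append_right, Fin.append_right]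
      exact delConst_spec j j' h a _ rfl

lemma key_induction (k : ℕ) (G : Set (Pred k)) (r : ℕ) :
    ∀ (p : ℕ) (S : Set (Tuple k ((r+1) + p))) (a : Tuple k p) (T : Set (Tuple k (r+1))),
      (⟨(r+1) + p, S⟩ : Pred k) ∈ ppClosure k G →
      (∀ x, x ∈ T ↔ Fin.append x a ∈ S) →
      Essential k ⟨r+1, T⟩ →
      ∃ τ ∈ ppClosure k G, Essential k τ ∧ r + 1 ≤ τ.1 := by
  intro p
  induction p with
  | zero =>
    intro S a T hS hiff hess
    have hTS : T = S := Set.ext fun x => by rw [hiff x, fin_append_zero]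
    exact ⟨⟨r+1, S⟩, hS, hTS ▸ hess, le_refl _⟩
  | succ p IH =>
    intro S a T hS hiff hess
    by_cases hSess : Essential k ⟨(r+1) + (p+1), S⟩
    · exact ⟨⟨(r+1) + (p+1), S⟩, hS, hSess, Nat.le_add_right (r+1) (p+1)⟩
    · have hnowit : ¬ ∃ w, w ∉ S ∧ ∀ i : Fin ((r+1+p)+1), ∃ w' ∈ S, ∀ t, t ≠ i → w' t = w t :=
        fun hw => hSess ((essential_iff k (r+1+p) S).mpr hw)
      have hcl : ∀ w, (∀ i : Fin ((r+1+p)+1), ∃ w' ∈ S, ∀ t, t ≠ i → w' t = w t) → w ∈ S := by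
        intro w hw
        by_contra hws
        exact hnowit ⟨w, hws, hw⟩
      obtain ⟨xs, hxT, hP⟩ := (essential_iff k r T).mp hess
      have hj : ∃ j : Fin (p+1), ¬ ∃ w' ∈ S, ∀ t, t ≠ Fin.natAdd (r+1) j →
          w' t = Fin.append xs a t := by
        by_contra hall
        push_neg at hall
        apply hxT
        rw [hiff]
        apply hcl
        intro i
        refine Fin.addCases (m := r+1) (n := p+1)
          (motive := fun i => ∃ w' ∈ S, ∀ t, t ≠ i → w' t = Fin.append xs a t) ?_ ?_ i
        · intro i0
          obtain ⟨x', hx'T, hx'⟩ := hP i0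
          refine ⟨Fin.append x' a, (hiff x').mp hx'T, fun t ht => ?_⟩
          refine Fin.addCases (m := r+1) (n := p+1)
            (motive := fun t => t ≠ Fin.castAdd (p+1) i0 →
              Fin.append x' a t = Fin.append xs a t) ?_ ?_ t ht
          · intro i1 hi1
            rw [Fin.append_left, Fin.append_left]
            exact hx' i1 (fun hh => hi1 (by rw [hh]))
          · intro j1 _
            rw [Fin.append_right, Fin.append_right]
        · intro j0
          obtain ⟨w', hw'S, hw'⟩ := hall j0
          exact ⟨w', hw'S, hw'⟩
      obtain ⟨j, hj⟩ := hj
      set c := Fin.natAdd (r+1) j with hc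
      set a' := delConst p j a with ha'
      set S' : Set (Tuple k ((r+1)+p)) :=
        {v : Tuple k ((r+1)+p) | ∃ y : Tuple k 1, (fun t => Fin.append v y (delCoord r p j t)) ∈ S}
        with hS'def
      have hS' : (⟨(r+1)+p, S'⟩ : Pred k) ∈ ppClosure k G :=
        ppClosure_remap k G S hS (delCoord r p j)
      set T' : Set (Tuple k (r+1)) := {x : Tuple k (r+1) | Fin.append x a' ∈ S'} with hT'def
      have hT'iff : ∀ x : Tuple k (r+1), x ∈ T' ↔
          ∃ b : Fin k, (fun t => if t = c then b else Fin.append x a t) ∈ S := by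
        intro x
        constructor
        · rintro ⟨y, hy⟩
          refine ⟨y 0, ?_⟩
          have heq : (fun t => Fin.append (Fin.append x a') y (delCoord r p j t))
              = fun t => if t = c then y 0 else Fin.append x a t :=
            funext fun t => delCoord_key j a x y t
          rwa [heq] at hy
        · rintro ⟨b, hb⟩
          refine ⟨fun _ => b, ?_⟩
          have heq : (fun t => Fin.append (Fin.append x a') (fun _ => b) (delCoord r p j t))
              = fun t => if t = c then b else Fin.append x a t :=
            funext fun t => delCoord_key j a x (fun _ => b) t
          rwa [heq]
      have hTsub : ∀ x, x ∈ T → x ∈ T' := by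
        intro x hx
        rw [hT'iff]
        refine ⟨a j, ?_⟩
        have heq : (fun t => if t = c then a j else Fin.append x a t) = Fin.append x a := by
          funext t
          split_ifs with ht
          · rw [ht, hc, Fin.append_right]
          · rfl
        rw [heq]
        exact (hiff x).mp hx
      have hess' : Essential k ⟨r+1, T'⟩ := by
        rw [essential_iff]
        refine ⟨xs, ?_, fun i => ?_⟩
        · intro hxs
          rw [hT'iff] at hxs
          obtain ⟨b, hb⟩ := hxs
          exact hj ⟨_, hb, fun t ht => if_neg ht⟩
        · obtain ⟨x', hx'T, hx'⟩ := hP i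
          exact ⟨x', hTsub x' hx'T, hx'⟩
      exact IH S' a' T' hS' (fun x => Iff.rfl) hess'

lemma finite_arity_le (k n0 : ℕ) : {ρ : Pred k | ρ.1 ≤ n0}.Finite := by
  have hsub : {ρ : Pred k | ρ.1 ≤ n0} ⊆ ⋃ r ∈ Set.Iic n0, (Sigma.mk r '' Set.univ) := by
    intro ρ hρ
    simp only [Set.mem_iUnion]
    exact ⟨ρ.1, hρ, ρ.2, trivial, Sigma.eta ρ⟩
  exact Set.Finite.subset
    (Set.Finite.biUnion (Set.finite_Iic n0) (fun r _ => Set.Finite.image _ Set.finite_univ)) hsub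

theorem essential_with_SR (k : ℕ) (hk : 2 ≤ k) (G : Set (Pred k)) (n : ℕ) :
    ((∀ ρ ∈ ppClosure k G, Essential k ρ → ρ.1 ≤ n) ↔
      (∀ ρ ∈ ppClosure k (G ∪ SR k), Essential k ρ → ρ.1 ≤ n)) ∧
    ({ ρ ∈ ppClosure k G | Essential k ρ }.Finite ↔
      { ρ ∈ ppClosure k (G ∪ SR k) | Essential k ρ }.Finite) := by
  have hsub : ppClosure k G ⊆ ppClosure k (G ∪ SR k) :=
    ppClosure_mono k Set.subset_union_left
  have main : ∀ n0, (∀ ρ ∈ ppClosure k G, Essential k ρ → ρ.1 ≤ n0) →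
      ∀ ρ ∈ ppClosure k (G ∪ SR k), Essential k ρ → ρ.1 ≤ n0 := by
    intro n0 H ρ' hρ' hess
    obtain ⟨m, T⟩ := ρ'
    obtain ⟨p, a, S, hSpp, hiff⟩ := constant_elim k hk G ⟨m, T⟩ hρ'
    match m, T, a, S, hSpp, hiff, hess with
    | 0, T, a, S, hSpp, hiff, hess => exact Nat.zero_le n0
    | (r+1), T, a, S, hSpp, hiff, hess =>
      obtain ⟨τ, hτpp, hτess, hle⟩ := key_induction k G r p S a T hSpp hiff hess
      exact le_trans hle (H τ hτpp hτess)
  constructor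
  · constructor
    · exact fun H => main n H
    · intro H ρ hρ hess
      exact H ρ (hsub hρ) hess
  · constructor
    · intro hfin
      obtain ⟨n0, hn0⟩ := (hfin.image Sigma.fst).bddAbove
      have H : ∀ ρ ∈ ppClosure k G, Essential k ρ → ρ.1 ≤ n0 :=
        fun ρ h1 h2 => hn0 ⟨ρ, ⟨h1, h2⟩, rfl⟩
      exact (finite_arity_le k n0).subset (fun ρ hρ => main n0 H ρ hρ.1 hρ.2)
    · intro hfin
      exact hfin.subset (fun ρ hρ => ⟨hsub hρ.1, hρ.2⟩)
end
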